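/- Fix p ∈ R^3 identified with a non-identity element of SU(2) (via R^3 ≅ SU(2) \ {1}), with |p| > 1. The self-map ψ_p of the unit sphere S^2 ⊂ R^3 defined by ψ_p(v) = (p^{-1}·v − p^{-1}·0)/|p^{-1}·v − p^{-1}·0| (where · denotes the SU(2) group operation transported to R^3 ∪ {∞} ≅ SU(2), and subtraction and norm are those of R^3) is homotopic to the identity map of S^2, hence has degree one. -/

import Mathlib

open scoped OnePoint
open OnePoint Filter Topology

noncomputable section

local notation "E3" => EuclideanSpace ℝ (Fin 3)

/-- The path in the one-point compactification going from `p` out to `∞` along the ray. -/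
noncomputable def psiPath (p : E3) (t : unitInterval) : OnePoint E3 :=
  if (t : ℝ) = 1 then ∞ else OnePoint.some ((1 - (t : ℝ))⁻¹ • p)

lemma psiPath_zero (p : E3) : psiPath p 0 = OnePoint.some p := by
  simp [psiPath]

lemma psiPath_one (p : E3) : psiPath p 1 = ∞ := by
  simp [psiPath]

lemma psiPath_norm (p : E3) (hp : 1 < ‖p‖) (t : unitInterval) :
    psiPath p t = ∞ ∨ ∃ x : E3, psiPath p t = OnePoint.some x ∧ 1 < ‖x‖ := by
  by_cases ht : (t : ℝ) = 1
  · left; simp [psiPath, ht]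
  · right
    refine ⟨(1 - (t : ℝ))⁻¹ • p, by simp [psiPath, ht], ?_⟩
    have h1 : 0 < 1 - (t : ℝ) := lt_of_le_of_ne (by linarith [t.2.2]) (by
      intro h; exact ht (by linarith))
    have h2 : 1 - (t : ℝ) ≤ 1 := by linarith [t.2.1]
    have h3 : (1 : ℝ) ≤ (1 - (t : ℝ))⁻¹ := one_le_inv_iff₀.mpr ⟨h1, h2⟩
    calc (1 : ℝ) < ‖p‖ := hp
    _ = 1 * ‖p‖ := (one_mul _).symm
    _ ≤ (1 - (t : ℝ))⁻¹ * ‖p‖ := by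
        apply mul_le_mul_of_nonneg_right h3 (norm_nonneg _)
    _ = ‖(1 - (t : ℝ))⁻¹ • p‖ := by
        rw [norm_smul, Real.norm_eq_abs, abs_of_pos (by positivity)]

lemma continuous_psiPath (p : E3) (hp : p ≠ 0) : Continuous (psiPath p) := by
  rw [continuous_iff_continuousAt]
  intro t
  by_cases ht : (t : ℝ) = 1
  · have ht' : t = 1 := Subtype.ext ht
    subst ht'
    rw [ContinuousAt, psiPath_one]
    rw [← nhdsNE_sup_pure]
    refine Tendsto.sup ?_ (by
      rw [tendsto_pure_left]
      intro s hs
      simpa [psiPath_one] using mem_of_mem_nhds hs)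
    have hne : ∀ s : unitInterval, s ≠ 1 → (s : ℝ) ≠ 1 := by
      intro s hs h; exact hs (Subtype.ext h)
    have heq : ∀ᶠ s in 𝓝[≠] (1 : unitInterval),
        psiPath p s = OnePoint.some ((1 - (s : ℝ))⁻¹ • p) := by
      filter_upwards [self_mem_nhdsWithin] with s hs
      simp [psiPath, hne s hs]
    rw [tendsto_congr' heq]
    apply OnePoint.tendsto_coe_infty.comp
    rw [coclosedCompact_eq_cocompact, ← Metric.cobounded_eq_cocompact,
      ← tendsto_norm_atTop_iff_cobounded]
    have hnorm : ∀ s : unitInterval, s ≠ 1 →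
        ‖(1 - (s : ℝ))⁻¹ • p‖ = (1 - (s : ℝ))⁻¹ * ‖p‖ := by
      intro s hs
      have h1 : 0 < 1 - (s : ℝ) := lt_of_le_of_ne (by linarith [s.2.2]) (by
        intro h; exact hne s hs (by linarith))
      rw [norm_smul, Real.norm_eq_abs, abs_of_pos (by positivity)]
    rw [tendsto_congr' (by filter_upwards [self_mem_nhdsWithin] with s hs using hnorm s hs)]
    apply Tendsto.atTop_mul_const (norm_pos_iff.mpr hp)
    apply tendsto_inv_nhdsGT_zero.comp
    have h0 : Tendsto (fun s : unitInterval => 1 - (s : ℝ)) (𝓝[≠] (1 : unitInterval)) (𝓝 0) := by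
      apply tendsto_nhdsWithin_of_tendsto_nhds
      have : Continuous (fun s : unitInterval => 1 - (s : ℝ)) := by continuity
      simpa using this.tendsto 1
    rw [tendsto_nhdsWithin_iff]
    refine ⟨h0, ?_⟩
    filter_upwards [self_mem_nhdsWithin] with s hs
    have h1 : 0 < 1 - (s : ℝ) := lt_of_le_of_ne (by linarith [s.2.2]) (by
      intro h; exact hne s hs (by linarith))
    exact h1
  · have hopen : {s : unitInterval | (s : ℝ) ≠ 1} ∈ 𝓝 t := by
      apply IsOpen.mem_nhds
      · exact isOpen_compl_singleton.preimage continuous_subtype_val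
      · exact ht
    apply ContinuousAt.congr_of_eventuallyEq
      (f := fun s : unitInterval => OnePoint.some ((1 - (s : ℝ))⁻¹ • p))
    · apply Continuous.continuousAt ?_ |>.comp ?_
      · exact OnePoint.continuous_coe
      · apply ContinuousAt.smul (f := fun s : unitInterval => (1 - (s : ℝ))⁻¹) (g := fun _ => p) ?_ continuousAt_const
        apply ContinuousAt.inv₀
        · exact (continuous_const.sub continuous_subtype_val).continuousAt
        · intro h; exact ht (by linarith [sub_eq_zero.mp h])
    · filter_upwards [hopen] with s hs
      simp [psiPath, hs]

/-- Identify `SU(2) ≅ S³` with the one-point compactification `ℝ³ ∪ {∞}` via a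
homeomorphism `e` sending `∞` to the identity element `1` (so `ℝ³ ≅ SU(2) \ {1}`).
Fix `p ∈ ℝ³` with `|p| > 1`. Then the self-map `ψ_p` of the unit sphere `S² ⊂ ℝ³`
defined by `ψ_p(v) = (p⁻¹·v − p⁻¹·0)/|p⁻¹·v − p⁻¹·0|` (where `·` is the group
operation of `G = SU(2)` transported to `ℝ³ ∪ {∞}` via `e`, and the subtraction and
norm are those of `ℝ³`) is homotopic to the identity map of `S²` (hence has degree one).
Stated for an arbitrary topological group `G` in place of `SU(2)`. -/
theorem psi_p_homotopic_id {G : Type*} [TopologicalSpace G] [Group G]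
    [IsTopologicalGroup G]
    (e : OnePoint (EuclideanSpace ℝ (Fin 3)) ≃ₜ G) (he : e ∞ = 1)
    (p : EuclideanSpace ℝ (Fin 3)) (hp : 1 < ‖p‖)
    (ψ : C(Metric.sphere (0 : EuclideanSpace ℝ (Fin 3)) 1,
          Metric.sphere (0 : EuclideanSpace ℝ (Fin 3)) 1))
    (hψ : ∀ (v : EuclideanSpace ℝ (Fin 3))
        (hv : v ∈ Metric.sphere (0 : EuclideanSpace ℝ (Fin 3)) 1)
        (a b : EuclideanSpace ℝ (Fin 3)),
        e.symm ((e (OnePoint.some p))⁻¹ * e (OnePoint.some v)) = OnePoint.some a →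
        e.symm ((e (OnePoint.some p))⁻¹
            * e (OnePoint.some (0 : EuclideanSpace ℝ (Fin 3)))) = OnePoint.some b →
        ((ψ ⟨v, hv⟩ : Metric.sphere (0 : EuclideanSpace ℝ (Fin 3)) 1)
            : EuclideanSpace ℝ (Fin 3))
          = ‖a - b‖⁻¹ • (a - b)) :
    ψ.Homotopic (ContinuousMap.id _) := by
  have hp0 : p ≠ 0 := by
    intro h; rw [h, norm_zero] at hp; linarith
  -- the moving-point maps
  set A : unitInterval × (Metric.sphere (0 : E3) 1) → OnePoint E3 :=
    fun x => e.symm ((e (psiPath p x.1))⁻¹ * e (OnePoint.some (x.2 : E3))) with hA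
  set B : unitInterval × (Metric.sphere (0 : E3) 1) → OnePoint E3 :=
    fun x => e.symm ((e (psiPath p x.1))⁻¹ * e (OnePoint.some (0 : E3))) with hB
  have hAcont : Continuous A := by
    apply e.symm.continuous.comp
    exact ((e.continuous.comp ((continuous_psiPath p hp0).comp continuous_fst)).inv).mul
      (e.continuous.comp (OnePoint.continuous_coe.comp
        (continuous_subtype_val.comp continuous_snd)))
  have hBcont : Continuous B := by
    apply e.symm.continuous.comp
    exact ((e.continuous.comp ((continuous_psiPath p hp0).comp continuous_fst)).inv).mul
      continuous_const
  -- neither map hits ∞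
  have hsymm_infty : ∀ z : G, e.symm z = ∞ ↔ z = e ∞ := by
    intro z
    constructor
    · intro h; rw [← h]; simp
    · intro h; rw [h]; simp
  have hAne : ∀ x, A x ≠ ∞ := by
    rintro ⟨t, v⟩ h
    rw [hsymm_infty, he, inv_mul_eq_one] at h
    have hv : OnePoint.some (v : E3) = psiPath p t := e.injective h.symm
    rcases psiPath_norm p hp t with h1 | ⟨x, h1, h2⟩
    · rw [h1] at hv; exact (OnePoint.coe_ne_infty _) hv
    · rw [h1] at hv
      have : (v : E3) = x := OnePoint.coe_injective hv
      have hvn : ‖(v : E3)‖ = 1 := by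
        simpa using mem_sphere_zero_iff_norm.mp v.2
      rw [this] at hvn; rw [hvn] at h2; linarith
  have hBne : ∀ x, B x ≠ ∞ := by
    rintro ⟨t, v⟩ h
    rw [hsymm_infty, he, inv_mul_eq_one] at h
    have hv : OnePoint.some (0 : E3) = psiPath p t := e.injective h.symm
    rcases psiPath_norm p hp t with h1 | ⟨x, h1, h2⟩
    · rw [h1] at hv; exact (OnePoint.coe_ne_infty _) hv
    · rw [h1] at hv
      have : (0 : E3) = x := OnePoint.coe_injective hv
      rw [← this, norm_zero] at h2; linarith
  -- lift to E3
  set a : unitInterval × (Metric.sphere (0 : E3) 1) → E3 := fun x => (A x).elim 0 id with ha0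
  set b : unitInterval × (Metric.sphere (0 : E3) 1) → E3 := fun x => (B x).elim 0 id with hb0
  have haA : ∀ x, OnePoint.some (a x) = A x := by
    intro x
    rcases hx : A x with _ | y
    · exact absurd hx (hAne x)
    · simp [ha0, hx]; rfl
  have hbB : ∀ x, OnePoint.some (b x) = B x := by
    intro x
    rcases hx : B x with _ | y
    · exact absurd hx (hBne x)
    · simp [hb0, hx]; rfl
  have hacont : Continuous a := by
    rw [OnePoint.isOpenEmbedding_coe.isEmbedding.continuous_iff]
    convert hAcont using 1
    exact funext haA
  have hbcont : Continuous b := by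
    rw [OnePoint.isOpenEmbedding_coe.isEmbedding.continuous_iff]
    convert hBcont using 1
    exact funext hbB
  have hab : ∀ x, a x - b x ≠ 0 := by
    rintro ⟨t, v⟩ h
    rw [sub_eq_zero] at h
    have hAB : A (t, v) = B (t, v) := by rw [← haA, ← hbB, h]
    simp only [hA, hB] at hAB
    have := e.symm.injective hAB
    have := e.injective (mul_left_cancel this)
    have hv0 : (v : E3) = 0 := OnePoint.coe_injective this
    have hvn : ‖(v : E3)‖ = 1 := by simpa using mem_sphere_zero_iff_norm.mp v.2
    rw [hv0, norm_zero] at hvn; linarith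
  -- the homotopy
  set H : unitInterval × (Metric.sphere (0 : E3) 1) → E3 := fun x => ‖a x - b x‖⁻¹ • (a x - b x) with hH
  have hHmem : ∀ x, H x ∈ Metric.sphere (0 : E3) 1 := by
    intro x
    rw [mem_sphere_zero_iff_norm]
    exact norm_smul_inv_norm (𝕜 := ℝ) (hab x)
  have hHcont : Continuous H := by
    apply Continuous.smul (f := fun x => ‖a x - b x‖⁻¹) (g := fun x => a x - b x)
    · exact (Continuous.norm (hacont.sub hbcont)).inv₀
        (fun x => norm_ne_zero_iff.mpr (hab x))
    · exact hacont.sub hbcont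
  refine ⟨{ toFun := fun x => ⟨H x, hHmem x⟩,
            continuous_toFun := hHcont.subtype_mk _,
            map_zero_left := ?_, map_one_left := ?_ }⟩
  · -- at t = 0 it is ψ
    intro v
    apply Subtype.ext
    show H (0, v) = (ψ v : E3)
    obtain ⟨v', hv'⟩ := v
    rw [hψ v' hv' (a (0, ⟨v', hv'⟩)) (b (0, ⟨v', hv'⟩)) ?_ ?_]
    · rw [← psiPath_zero p]
      exact (haA (0, ⟨v', hv'⟩)).symm
    · rw [← psiPath_zero p]
      exact (hbB (0, ⟨v', hv'⟩)).symm
  · -- at t = 1 it is the identity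
    intro v
    apply Subtype.ext
    show H (1, v) = (v : E3)
    have hAv : A (1, v) = OnePoint.some (v : E3) := by
      simp [hA, psiPath_one, he]
    have hBv : B (1, v) = OnePoint.some (0 : E3) := by
      simp [hB, psiPath_one, he]
    have hav : a (1, v) = (v : E3) :=
      OnePoint.coe_injective ((haA (1, v)).trans hAv)
    have hbv : b (1, v) = (0 : E3) :=
      OnePoint.coe_injective ((hbB (1, v)).trans hBv)
    have hvn : ‖(v : E3)‖ = 1 := by simpa using mem_sphere_zero_iff_norm.mp v.2
    simp [hH, hav, hbv, hvn]

end
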